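/- Let N ≥ 2, d = (N−1)(N+2)/2, and M ≥ d+1. Let Φ = {φ_k}_{k=1}^M be a frame for ℝ^N that is strictly (d+1)-scalable but not d-scalable. Then F(Φ) = {F(φ_k)}_{k=1}^M is a frame for ℝ^d, i.e., the vectors F(φ_1),...,F(φ_M) span ℝ^d. -/

import Mathlib

open scoped BigOperators

namespace ScalableFrames

/-- The Euclidean dot product on `Fin n → ℝ`. -/
def dot {n : ℕ} (x y : Fin n → ℝ) : ℝ := ∑ i, x i * y i

/-- `Φ = {φ_k}_{k=1}^M` is a frame for `ℝ^N`:
there are `0 < A, B` with `A‖x‖² ≤ ∑_k ⟨x, φ_k⟩² ≤ B‖x‖²` for all `x`. -/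
def IsFrame {M N : ℕ} (Φ : Fin M → Fin N → ℝ) : Prop :=
  ∃ A B : ℝ, 0 < A ∧ 0 < B ∧ ∀ x : Fin N → ℝ,
    A * dot x x ≤ ∑ k, dot x (Φ k) ^ 2 ∧ ∑ k, dot x (Φ k) ^ 2 ≤ B * dot x x

/-- `Φ` is a tight frame for `ℝ^N` (the frame inequality holds with `A = B > 0`). -/
def IsTight {M N : ℕ} (Φ : Fin M → Fin N → ℝ) : Prop :=
  ∃ A : ℝ, 0 < A ∧ ∀ x : Fin N → ℝ, ∑ k, dot x (Φ k) ^ 2 = A * dot x x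

/-- The subfamily `{φ_i}_{i ∈ I}` is a tight frame for `ℝ^N`. -/
def IsTightOn {M N : ℕ} (Φ : Fin M → Fin N → ℝ) (I : Finset (Fin M)) : Prop :=
  ∃ A : ℝ, 0 < A ∧ ∀ x : Fin N → ℝ, ∑ k ∈ I, dot x (Φ k) ^ 2 = A * dot x x

/-- `Φ` is scalable: nonnegative scalars `c_k` make `{c_k φ_k}` a tight frame. -/
def IsScalable {M N : ℕ} (Φ : Fin M → Fin N → ℝ) : Prop :=
  ∃ c : Fin M → ℝ, (∀ k, 0 ≤ c k) ∧ IsTight fun k => c k • Φ k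

/-- `Φ` is strictly scalable: strictly positive scalars `c_k` make `{c_k φ_k}` a tight frame. -/
def IsStrictlyScalable {M N : ℕ} (Φ : Fin M → Fin N → ℝ) : Prop :=
  ∃ c : Fin M → ℝ, (∀ k, 0 < c k) ∧ IsTight fun k => c k • Φ k

/-- `Φ` is `m`-scalable: some subset `I` of size `m` admits nonnegative scalars `(c_i)_{i∈I}`
making `{c_i φ_i}_{i∈I}` a tight frame for `ℝ^N`. -/
def IsMScalable {M N : ℕ} (Φ : Fin M → Fin N → ℝ) (m : ℕ) : Prop :=
  ∃ I : Finset (Fin M), I.card = m ∧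
    ∃ c : Fin M → ℝ, (∀ i ∈ I, 0 ≤ c i) ∧ IsTightOn (fun k => c k • Φ k) I

/-- `Φ` is strictly `m`-scalable: some subset `I` of size `m` admits strictly positive scalars
`(c_i)_{i∈I}` making `{c_i φ_i}_{i∈I}` a tight frame for `ℝ^N`. -/
def IsStrictlyMScalable {M N : ℕ} (Φ : Fin M → Fin N → ℝ) (m : ℕ) : Prop :=
  ∃ I : Finset (Fin M), I.card = m ∧
    ∃ c : Fin M → ℝ, (∀ i ∈ I, 0 < c i) ∧ IsTightOn (fun k => c k • Φ k) I

/-- The rank-one outer product `φφᵀ` as an `N×N` matrix. -/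
def outer {N : ℕ} (φ : Fin N → ℝ) : Matrix (Fin N) (Fin N) ℝ := Matrix.vecMulVec φ φ

/-- `d = (N-1)(N+2)/2`. -/
def Fdim (N : ℕ) : ℕ := (N - 1) * (N + 2) / 2

/-- The map `F : ℝ^N → ℝ^d` obtained by stacking the blocks
`F_0(x) = (x_1²-x_2², …, x_1²-x_N²)` and `F_k(x) = (x_k x_{k+1}, …, x_k x_N)`, `k = 1,…,N-1`;
in `1`-based indexing the entry `x_k x_ℓ` sits at position `k(2N-1-k)/2 + ℓ - 1`. -/
def Fmap {N : ℕ} (x : Fin N → ℝ) : Fin (Fdim N) → ℝ := fun j =>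
  (if h : j.val + 1 < N then x ⟨0, by omega⟩ ^ 2 - x ⟨j.val + 1, h⟩ ^ 2 else 0) +
  ∑ a : Fin N, ∑ b : Fin N,
    if a.val < b.val ∧ j.val + 1 = (a.val + 1) * (2 * N - 2 - a.val) / 2 + b.val
    then x a * x b else 0

open Classical in
/-- `‖u‖₀`, the number of nonzero entries of `u`. -/
noncomputable def zeroNorm {n : ℕ} (u : Fin n → ℝ) : ℕ :=
  (Finset.univ.filter fun i => u i ≠ 0).card

lemma nt_dvd (N a : ℕ) : 2 ∣ (a+1)*(2*N-2-a) := by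
  rcases Nat.even_or_odd a with h | h
  · obtain ⟨r, rfl⟩ := h
    rcases le_or_gt (r+r) (2*N-2) with h2 | h2
    · exact dvd_mul_of_dvd_right (by omega) _
    · rw [show 2*N-2-(r+r) = 0 by omega]; simp
  · obtain ⟨r, rfl⟩ := h
    exact dvd_mul_of_dvd_left ⟨r+1, by ring⟩ _

lemma nt_fdim2 (N : ℕ) (hN : 2 ≤ N) : 2 * Fdim N = (N-1)*(N+2) := by
  rw [Fdim, Nat.mul_div_cancel']
  rcases Nat.even_or_odd N with h | h
  · obtain ⟨r, rfl⟩ := h; exact dvd_mul_of_dvd_right ⟨r+1, by omega⟩ _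
  · obtain ⟨r, rfl⟩ := h; exact dvd_mul_of_dvd_left ⟨r, by omega⟩ _

lemma nt_low (N a b : ℕ) (hN : 2 ≤ N) (hab : a < b) (hbN : b < N) :
    N ≤ (a+1)*(2*N-2-a)/2 + b := by
  have hd := Nat.div_mul_cancel (nt_dvd N a)
  have hmul : (2*N-2-a) ≤ (a+1)*(2*N-2-a) := Nat.le_mul_of_pos_left _ (by omega)
  set P := (a+1)*(2*N-2-a)
  omega

lemma nt_high (N a b : ℕ) (hN : 2 ≤ N) (hab : a < b) (hbN : b < N) :
    (a+1)*(2*N-2-a)/2 + b ≤ Fdim N := by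
  have hd := Nat.div_mul_cancel (nt_dvd N a)
  have hd2 := nt_fdim2 N hN
  obtain ⟨s, hsa⟩ : ∃ s, s + a = 2*N-2 ∧ s = 2*N-2-a := ⟨2*N-2-a, by omega, rfl⟩
  rw [← hsa.2] at hd ⊢
  have key : (a+1)*s + 2*b ≤ (N-1)*(N+2) := by
    zify [show 1 ≤ N by omega]
    have h1 : (s:ℤ) + a = 2*N-2 := by have := hsa.1; omega
    nlinarith [mul_nonneg (show (0:ℤ) ≤ (N:ℤ)-2-a by omega) (show (0:ℤ) ≤ (N:ℤ)-1-a by omega),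
      show ((b:ℤ)) ≤ (N:ℤ)-1 by omega]
  set P := (a+1)*s
  set Q := (N-1)*(N+2)
  omega

lemma nt_mono (N a b a' b' : ℕ) (hN : 2 ≤ N) (hab : a < b) (hbN : b < N)
    (hab' : a' < b') (hbN' : b' < N) (haa : a < a') :
    (a+1)*(2*N-2-a)/2 + b < (a'+1)*(2*N-2-a')/2 + b' := by
  have hd := Nat.div_mul_cancel (nt_dvd N a)
  have hd' := Nat.div_mul_cancel (nt_dvd N a')
  obtain ⟨s, hsa⟩ : ∃ s, s + a = 2*N-2 ∧ s = 2*N-2-a := ⟨2*N-2-a, by omega, rfl⟩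
  obtain ⟨s', hsa'⟩ : ∃ s', s' + a' = 2*N-2 ∧ s' = 2*N-2-a' := ⟨2*N-2-a', by omega, rfl⟩
  rw [← hsa.2] at hd ⊢
  rw [← hsa'.2] at hd' ⊢
  have key : (a+1)*s + 2*b < (a'+1)*s' + 2*b' := by
    zify
    have h1 : (s:ℤ) + a = 2*N-2 := by have := hsa.1; omega
    have h1' : (s':ℤ) + a' = 2*N-2 := by have := hsa'.1; omega
    nlinarith [mul_nonneg (show (0:ℤ) ≤ (a':ℤ)-a-1 by omega)
        (show (0:ℤ) ≤ 2*(N:ℤ)-3-a-a' by omega),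
      show ((b:ℤ)) ≤ (N:ℤ)-1 by omega,
      show ((a':ℤ)+1) ≤ (b':ℤ) by omega]
  set P := (a+1)*s
  set P' := (a'+1)*s'
  omega

lemma nt_inj (N a b a' b' : ℕ) (hN : 2 ≤ N) (hab : a < b) (hbN : b < N)
    (hab' : a' < b') (hbN' : b' < N)
    (heq : (a+1)*(2*N-2-a)/2 + b = (a'+1)*(2*N-2-a')/2 + b') : a = a' ∧ b = b' := by
  rcases lt_trichotomy a a' with h | h | h
  · exact absurd heq (Nat.ne_of_lt (nt_mono N a b a' b' hN hab hbN hab' hbN' h))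
  · subst h; omega
  · exact absurd heq.symm (Nat.ne_of_lt (nt_mono N a' b' a b hN hab' hbN' hab hbN h))

lemma dot_single {n : ℕ} (a : Fin n) (y : Fin n → ℝ) : dot (Pi.single a 1) y = y a := by
  simp [dot, Pi.single_apply, ite_mul]

lemma dot_add_left {n : ℕ} (x x' y : Fin n → ℝ) : dot (x + x') y = dot x y + dot x' y := by
  simp [dot, add_mul, Finset.sum_add_distrib]

lemma dot_smul_right {n : ℕ} (c : ℝ) (x y : Fin n → ℝ) : dot x (c • y) = c * dot x y := by
  rw [dot, dot, Finset.mul_sum]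
  exact Finset.sum_congr rfl fun i _ => by simp [mul_comm, mul_left_comm]

/-- If all `F`-coordinate sums vanish, the weighted family is "tight" with constant
`∑ w k * (Φ k 0)²`. -/
lemma tight_of_F {M N : ℕ} (hN : 2 ≤ N) (Φ : Fin M → Fin N → ℝ) (J : Finset (Fin M))
    (w : Fin M → ℝ) (hF : ∀ j : Fin (Fdim N), ∑ k ∈ J, w k * Fmap (Φ k) j = 0)
    (z : Fin N) (hz : z.val = 0) :
    ∀ x : Fin N → ℝ, ∑ k ∈ J, w k * dot x (Φ k) ^ 2
      = (∑ k ∈ J, w k * Φ k z ^ 2) * dot x x := by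
  classical
  set m : Fin N → Fin N → ℝ := fun a b => ∑ k ∈ J, w k * (Φ k a * Φ k b) with hm
  have hdim2 := nt_fdim2 N hN
  -- off-diagonal entries vanish
  have hoff : ∀ a b : Fin N, a.val < b.val → m a b = 0 := by
    intro a b hab
    have hbN := b.isLt
    have hglow := nt_low N a.val b.val hN hab hbN
    have hghigh := nt_high N a.val b.val hN hab hbN
    set g := (a.val+1)*(2*N-2-a.val)/2 + b.val with hg
    let j : Fin (Fdim N) := ⟨g - 1, by omega⟩
    have hj1 : j.val + 1 = g := by
      show g - 1 + 1 = g
      omega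
    have hFk : ∀ k, Fmap (Φ k) j = Φ k a * Φ k b := by
      intro k
      rw [Fmap]
      rw [dif_neg (by omega : ¬ (j.val + 1 < N)), zero_add]
      rw [Finset.sum_eq_single a]
      · rw [Finset.sum_eq_single b]
        · rw [if_pos ⟨hab, by rw [hj1]⟩]
        · intro b' _ hb'
          apply if_neg
          rintro ⟨h1, h2⟩
          rw [hj1] at h2
          exact hb' (Fin.ext (nt_inj N a.val b'.val a.val b.val hN h1 b'.isLt hab hbN h2.symm).2)
        · intro h; exact absurd (Finset.mem_univ b) h
      · intro a' _ ha'
        apply Finset.sum_eq_zero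
        intro b' _
        apply if_neg
        rintro ⟨h1, h2⟩
        rw [hj1] at h2
        exact ha' (Fin.ext (nt_inj N a'.val b'.val a.val b.val hN h1 b'.isLt hab hbN h2.symm).1)
      · intro h; exact absurd (Finset.mem_univ a) h
    have h0 := hF j
    show ∑ k ∈ J, w k * (Φ k a * Φ k b) = 0
    rw [← h0]
    exact Finset.sum_congr rfl fun k _ => by rw [hFk k]
  have hoff' : ∀ a b : Fin N, a ≠ b → m a b = 0 := by
    intro a b hab
    rcases lt_trichotomy a.val b.val with h | h | h
    · exact hoff a b h
    · exact absurd (Fin.ext h) hab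
    · show ∑ k ∈ J, w k * (Φ k a * Φ k b) = 0
      have heq2 : ∑ k ∈ J, w k * (Φ k a * Φ k b) = ∑ k ∈ J, w k * (Φ k b * Φ k a) :=
        Finset.sum_congr rfl fun k _ => by ring
      rw [heq2]
      exact hoff b a h
  -- diagonal entries are all equal
  have hdiagle : ∀ a : Fin N, m a a = m z z := by
    intro a
    by_cases haz : a.val = 0
    · congr 1 <;> exact Fin.ext (by omega)
    · have haN := a.isLt
      have hfd : N - 1 ≤ Fdim N := by
        have : (N-1)*2 ≤ (N-1)*(N+2) := Nat.mul_le_mul_left _ (by omega)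
        omega
      let j : Fin (Fdim N) := ⟨a.val - 1, by omega⟩
      have hj1 : j.val + 1 = a.val := by
        show a.val - 1 + 1 = a.val
        omega
      have hFk : ∀ k, Fmap (Φ k) j = Φ k z ^ 2 - Φ k a ^ 2 := by
        intro k
        rw [Fmap]
        rw [dif_pos (by omega : j.val + 1 < N)]
        have hea : (⟨j.val + 1, by omega⟩ : Fin N) = a := Fin.ext (by simp only [Fin.val_mk]; omega)
        have hez : (⟨0, by omega⟩ : Fin N) = z := Fin.ext (by simp only [Fin.val_mk]; omega)
        rw [hea, hez]
        have : ∑ a' : Fin N, ∑ b' : Fin N,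
            (if a'.val < b'.val ∧ j.val + 1 = (a'.val + 1) * (2 * N - 2 - a'.val) / 2 + b'.val
            then Φ k a' * Φ k b' else 0) = 0 := by
          apply Finset.sum_eq_zero; intro a' _
          apply Finset.sum_eq_zero; intro b' _
          apply if_neg
          rintro ⟨h1, h2⟩
          have := nt_low N a'.val b'.val hN h1 b'.isLt
          omega
        rw [this, add_zero]
      have h0 := hF j
      have : ∑ k ∈ J, w k * (Φ k z ^ 2 - Φ k a ^ 2) = 0 := by
        rw [← h0]
        exact Finset.sum_congr rfl fun k _ => by rw [hFk k]
      have hsplit : ∑ k ∈ J, w k * (Φ k z ^ 2 - Φ k a ^ 2) = m z z - m a a := by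
        show _ = (∑ k ∈ J, w k * (Φ k z * Φ k z)) - ∑ k ∈ J, w k * (Φ k a * Φ k a)
        rw [← Finset.sum_sub_distrib]
        exact Finset.sum_congr rfl fun k _ => by ring
      rw [hsplit] at this
      linarith
  -- final computation
  intro x
  have expand : ∑ k ∈ J, w k * dot x (Φ k) ^ 2
      = ∑ a : Fin N, ∑ b : Fin N, (x a * x b) * m a b := by
    have step1 : ∀ k, w k * dot x (Φ k) ^ 2
        = ∑ a : Fin N, ∑ b : Fin N, (x a * x b) * (w k * (Φ k a * Φ k b)) := by
      intro k
      rw [dot, pow_two, Finset.sum_mul_sum, Finset.mul_sum]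
      apply Finset.sum_congr rfl; intro a _
      rw [Finset.mul_sum]
      exact Finset.sum_congr rfl fun b _ => by ring
    rw [Finset.sum_congr rfl fun k _ => step1 k]
    rw [Finset.sum_comm]
    apply Finset.sum_congr rfl; intro a _
    rw [Finset.sum_comm]
    apply Finset.sum_congr rfl; intro b _
    show _ = (x a * x b) * ∑ k ∈ J, w k * (Φ k a * Φ k b)
    rw [Finset.mul_sum]
  rw [expand]
  have step2 : ∀ a : Fin N, ∑ b : Fin N, (x a * x b) * m a b = (x a * x a) * m z z := by
    intro a
    rw [Finset.sum_eq_single a]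
    · rw [hdiagle a]
    · intro b _ hb
      rw [hoff' a b (Ne.symm hb), mul_zero]
    · intro h; exact absurd (Finset.mem_univ a) h
  rw [Finset.sum_congr rfl fun a _ => step2 a]
  have : ∑ k ∈ J, w k * Φ k z ^ 2 = m z z := by
    show _ = ∑ k ∈ J, w k * (Φ k z * Φ k z)
    exact Finset.sum_congr rfl fun k _ => by ring
  rw [this, dot, ← Finset.sum_mul, mul_comm]

/-- Let `N ≥ 2`, `d = (N-1)(N+2)/2` and `M ≥ d+1`. If a frame
`Φ = {φ_k}_{k=1}^M` for `ℝ^N` is strictly `(d+1)`-scalable but not `d`-scalable, then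
`F(Φ) = {F(φ_k)}_{k=1}^M` is a frame for `ℝ^d`, i.e. the `F(φ_k)` span `ℝ^d`. -/
theorem statement13 {M N : ℕ} (hN : 2 ≤ N) (hM : Fdim N + 1 ≤ M)
    (Φ : Fin M → Fin N → ℝ) (hframe : IsFrame Φ)
    (h1 : IsStrictlyMScalable Φ (Fdim N + 1)) (h2 : ¬ IsMScalable Φ (Fdim N)) :
    Submodule.span ℝ (Set.range fun k => Fmap (Φ k)) = ⊤ := by
  classical
  by_contra hspan
  set d := Fdim N with hd
  have hz0 : (0:ℕ) < N := by omega
  set z : Fin N := ⟨0, hz0⟩ with hzdef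
  -- extract a nonzero functional vanishing on all F(φ_k)
  have hlt : Submodule.span ℝ (Set.range fun k => Fmap (Φ k)) < ⊤ := lt_top_iff_ne_top.mpr hspan
  obtain ⟨f, hf0, hfmap⟩ := Submodule.exists_dual_map_eq_bot_of_lt_top hlt inferInstance
  set u : Fin d → ℝ := fun i => f (Pi.single i 1) with hu
  have hrepr : ∀ y : Fin d → ℝ, f y = dot u y := by
    intro y
    have hy : y = ∑ i, y i • (Pi.single i 1 : Fin d → ℝ) := by
      funext jj
      rw [Finset.sum_apply]
      simp [Pi.single_apply]
    calc f y = f (∑ i, y i • (Pi.single i 1 : Fin d → ℝ)) := by rw [← hy]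
      _ = ∑ i, y i • f (Pi.single i 1) := by rw [map_sum]; simp only [map_smul]
      _ = dot u y := by
          rw [dot]
          exact Finset.sum_congr rfl fun i _ => by rw [smul_eq_mul, mul_comm, hu]
  have hu0 : u ≠ 0 := by
    intro h
    apply hf0
    apply LinearMap.ext
    intro y
    rw [hrepr y, h]
    simp [dot]
  have hudot : ∀ k, dot u (Fmap (Φ k)) = 0 := by
    intro k
    have hmem : Fmap (Φ k) ∈ Submodule.span ℝ (Set.range fun k => Fmap (Φ k)) :=
      Submodule.subset_span ⟨k, rfl⟩
    have h2' : f (Fmap (Φ k)) ∈ Submodule.map f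
        (Submodule.span ℝ (Set.range fun k => Fmap (Φ k))) := Submodule.mem_map_of_mem hmem
    rw [hfmap, Submodule.mem_bot] at h2'
    rw [← hrepr]; exact h2'
  -- unpack strict (d+1)-scalability
  obtain ⟨I, hIcard, c, hcpos, A, hApos, htight0⟩ := h1
  have htight : ∀ x : Fin N → ℝ, ∑ k ∈ I, dot x (c k • Φ k) ^ 2 = A * dot x x := htight0
  set w : Fin M → ℝ := fun k => c k ^ 2 with hw
  have hS : ∀ x, ∑ k ∈ I, w k * dot x (Φ k) ^ 2 = A * dot x x := by
    intro x
    rw [← htight x]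
    exact (Finset.sum_congr rfl fun k _ => by rw [dot_smul_right]; ring).symm
  have hdiag : ∀ a : Fin N, ∑ k ∈ I, w k * Φ k a ^ 2 = A := by
    intro a
    have h := hS ((Pi.single a 1 : Fin N → ℝ))
    simp only [dot_single, Pi.single_eq_same, mul_one] at h
    exact h
  have hoff : ∀ a b : Fin N, a ≠ b → ∑ k ∈ I, w k * (Φ k a * Φ k b) = 0 := by
    intro a b hab
    have h := hS ((Pi.single a 1 : Fin N → ℝ) + (Pi.single b 1 : Fin N → ℝ))
    simp only [dot_add_left, dot_single] at h
    have hx : (((Pi.single a 1 : Fin N → ℝ) + (Pi.single b 1 : Fin N → ℝ)) a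
        + ((Pi.single a 1 : Fin N → ℝ) + (Pi.single b 1 : Fin N → ℝ)) b) = 2 := by
      simp [Pi.single_eq_same, Pi.single_eq_of_ne hab, Pi.single_eq_of_ne (Ne.symm hab)]
      norm_num
    rw [hx] at h
    have hexp : ∑ k ∈ I, w k * (Φ k a + Φ k b) ^ 2
        = ∑ k ∈ I, w k * Φ k a ^ 2 + ∑ k ∈ I, w k * Φ k b ^ 2
          + 2 * ∑ k ∈ I, w k * (Φ k a * Φ k b) := by
      rw [Finset.mul_sum, ← Finset.sum_add_distrib, ← Finset.sum_add_distrib]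
      exact Finset.sum_congr rfl fun k _ => by ring
    rw [hexp, hdiag a, hdiag b] at h
    linarith
  -- all weighted F-coordinate sums vanish
  have hFsum : ∀ j : Fin d, ∑ k ∈ I, w k * Fmap (Φ k) j = 0 := by
    intro j
    simp only [Fmap]
    rw [Finset.sum_congr rfl fun k (_ : k ∈ I) => mul_add (w k) _ _, Finset.sum_add_distrib]
    have part1 : ∑ k ∈ I, w k * (if h : j.val + 1 < N then
        Φ k ⟨0, by omega⟩ ^ 2 - Φ k ⟨j.val + 1, h⟩ ^ 2 else 0) = 0 := by
      by_cases hj : j.val + 1 < N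
      · simp only [dif_pos hj]
        have : ∑ k ∈ I, w k * (Φ k ⟨0, by omega⟩ ^ 2 - Φ k ⟨j.val + 1, hj⟩ ^ 2)
            = ∑ k ∈ I, w k * Φ k ⟨0, by omega⟩ ^ 2 - ∑ k ∈ I, w k * Φ k ⟨j.val + 1, hj⟩ ^ 2 := by
          rw [← Finset.sum_sub_distrib]
          exact Finset.sum_congr rfl fun k _ => by ring
        rw [this, hdiag, hdiag]
        ring
      · simp only [dif_neg hj, mul_zero, Finset.sum_const_zero]
    have part2 : ∑ k ∈ I, w k * (∑ a : Fin N, ∑ b : Fin N,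
        if a.val < b.val ∧ j.val + 1 = (a.val + 1) * (2 * N - 2 - a.val) / 2 + b.val
        then Φ k a * Φ k b else 0) = 0 := by
      have hpair : ∀ k, w k * (∑ a : Fin N, ∑ b : Fin N,
          if a.val < b.val ∧ j.val + 1 = (a.val + 1) * (2 * N - 2 - a.val) / 2 + b.val
          then Φ k a * Φ k b else 0)
          = ∑ a : Fin N, ∑ b : Fin N,
          if a.val < b.val ∧ j.val + 1 = (a.val + 1) * (2 * N - 2 - a.val) / 2 + b.val
          then w k * (Φ k a * Φ k b) else 0 := by
        intro k
        rw [Finset.mul_sum]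
        apply Finset.sum_congr rfl; intro a _
        rw [Finset.mul_sum]
        exact Finset.sum_congr rfl fun b _ => by rw [mul_ite, mul_zero]
      rw [Finset.sum_congr rfl fun k (_ : k ∈ I) => hpair k]
      rw [Finset.sum_comm]
      apply Finset.sum_eq_zero; intro a _
      rw [Finset.sum_comm]
      apply Finset.sum_eq_zero; intro b _
      by_cases hc : a.val < b.val ∧ j.val + 1 = (a.val + 1) * (2 * N - 2 - a.val) / 2 + b.val
      · rw [Finset.sum_congr rfl fun k (_ : k ∈ I) => if_pos hc]
        exact hoff a b (by rintro rfl; exact lt_irrefl _ hc.1)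
      · rw [Finset.sum_congr rfl fun k (_ : k ∈ I) => if_neg hc]
        exact Finset.sum_const_zero
    rw [part1, part2, add_zero]
  -- the (d+1) vectors (F(φ_i), φ_i(0)²) lie in a proper subspace, hence are dependent
  let f2 : ((Fin d → ℝ) × ℝ) →ₗ[ℝ] ℝ :=
    { toFun := fun p => dot u p.1
      map_add' := fun p q => by
        show dot u (p.1 + q.1) = dot u p.1 + dot u q.1
        simp [dot, mul_add, Finset.sum_add_distrib]
      map_smul' := fun r p => by
        show dot u (r • p.1) = r * dot u p.1
        exact dot_smul_right r u p.1 }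
  set K := LinearMap.ker f2 with hK
  have hupos : 0 < dot u u := by
    obtain ⟨i0, hi0⟩ := Function.ne_iff.mp hu0
    rw [dot]
    apply Finset.sum_pos' (fun i _ => mul_self_nonneg _)
    exact ⟨i0, Finset.mem_univ _, mul_self_pos.mpr hi0⟩
  have hKlt : K < ⊤ := by
    apply lt_top_iff_ne_top.mpr
    intro h
    have : f2 (u, (0:ℝ)) = 0 := by
      have := LinearMap.ker_eq_top.mp h
      rw [this]; rfl
    have h2' : dot u u = 0 := this
    linarith
  have hfr : Module.finrank ℝ K < d + 1 := by
    have h1' : Module.finrank ℝ ((Fin d → ℝ) × ℝ) = d + 1 := by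
      rw [Module.finrank_prod, Module.finrank_fin_fun, Module.finrank_self]
    have := Submodule.finrank_lt hKlt.ne
    omega
  have hIcard' : I.card = d + 1 := hIcard
  let eqv : Fin (d + 1) ≃ {x // x ∈ I} := ((I.equivFin).trans (finCongr hIcard')).symm
  let vK : Fin (d + 1) → K := fun i =>
    ⟨(Fmap (Φ (eqv i)), Φ (eqv i) z ^ 2), by
      rw [LinearMap.mem_ker]
      show dot u (Fmap (Φ (eqv i))) = 0
      exact hudot _⟩
  have hnli : ¬ LinearIndependent ℝ vK := by
    intro h
    have hcard := h.fintype_card_le_finrank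
    rw [Fintype.card_fin] at hcard
    omega
  obtain ⟨t0, ht0, i1, hti1⟩ := Fintype.not_linearIndependent_iff.mp hnli
  have hVsum : ∑ i, t0 i • ((Fmap (Φ (eqv i)), Φ (eqv i) z ^ 2) : (Fin d → ℝ) × ℝ) = 0 := by
    have h' := congrArg (fun v : K => (v : (Fin d → ℝ) × ℝ)) ht0
    simpa [vK] using h'
  have hFt : ∀ j, ∑ i, t0 i * Fmap (Φ (eqv i)) j = 0 := by
    intro j
    have h1' := congrArg Prod.fst hVsum
    simp only [Prod.fst_sum, Prod.smul_fst, Prod.fst_zero] at h1'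
    have h2' := congrFun h1' j
    simpa using h2'
  have hzt : ∑ i, t0 i * Φ (eqv i) z ^ 2 = 0 := by
    have h1' := congrArg Prod.snd hVsum
    simp only [Prod.snd_sum, Prod.smul_snd, Prod.snd_zero, smul_eq_mul] at h1'
    exact h1'
  -- transfer to sums over I
  set t : Fin M → ℝ := fun k => if hk : k ∈ I then t0 (eqv.symm ⟨k, hk⟩) else 0 with htdef
  have htrans : ∀ F : Fin M → ℝ, ∑ k ∈ I, t k * F k = ∑ i, t0 i * F (eqv i) := by
    intro F
    rw [← Finset.sum_coe_sort I (fun k => t k * F k)]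
    rw [← Equiv.sum_comp eqv (fun x : {x // x ∈ I} => t ↑x * F ↑x)]
    apply Finset.sum_congr rfl
    intro i _
    have hmem : (↑(eqv i) : Fin M) ∈ I := (eqv i).2
    have h1' : t ↑(eqv i) = t0 i := by
      simp only [htdef]
      rw [dif_pos hmem]
      congr 1
      rw [Subtype.coe_eta, Equiv.symm_apply_apply]
    rw [h1']
  have htI : ∀ j, ∑ k ∈ I, t k * Fmap (Φ k) j = 0 := fun j => by
    rw [htrans (fun k => Fmap (Φ k) j)]; exact hFt j
  have hztI : ∑ k ∈ I, t k * Φ k z ^ 2 = 0 := by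
    rw [htrans (fun k => Φ k z ^ 2)]; exact hzt
  have hine : ∃ i ∈ I, t i ≠ 0 := by
    refine ⟨eqv i1, (eqv i1).2, ?_⟩
    simp only [htdef]
    rw [dif_pos (eqv i1).2, Subtype.coe_eta, Equiv.symm_apply_apply]
    exact hti1
  -- normalize the sign
  obtain ⟨τ, hτF, hτz, i2, hi2I, hτpos⟩ :
      ∃ τ : Fin M → ℝ, (∀ j, ∑ k ∈ I, τ k * Fmap (Φ k) j = 0)
        ∧ (∑ k ∈ I, τ k * Φ k z ^ 2 = 0) ∧ ∃ i ∈ I, 0 < τ i := by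
    obtain ⟨i1', hi1'I, hti1'⟩ := hine
    rcases hti1'.lt_or_gt with hneg | hpos
    · refine ⟨fun k => - t k, ?_, ?_, i1', hi1'I, show 0 < - t i1' by linarith⟩
      · intro j
        simp only [neg_mul, Finset.sum_neg_distrib, htI j, neg_zero]
      · simp only [neg_mul, Finset.sum_neg_distrib, hztI, neg_zero]
    · exact ⟨t, htI, hztI, i1', hi1'I, hpos⟩
  have hwpos : ∀ i ∈ I, 0 < w i := fun i hi => pow_pos (hcpos i hi) 2
  -- choose the minimal ratio
  set P := I.filter (fun i => 0 < τ i) with hP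
  have hPne : P.Nonempty := ⟨i2, Finset.mem_filter.mpr ⟨hi2I, hτpos⟩⟩
  obtain ⟨i₀, hi₀P, hmin⟩ := Finset.exists_min_image P (fun i => w i / τ i) hPne
  obtain ⟨hi₀I, hτ₀⟩ := Finset.mem_filter.mp hi₀P
  set ε := w i₀ / τ i₀ with hε
  have hεpos : 0 < ε := div_pos (hwpos i₀ hi₀I) hτ₀
  set w' : Fin M → ℝ := fun k => w k - ε * τ k with hw'
  have hw'i₀ : w' i₀ = 0 := by
    simp only [hw', hε]
    rw [div_mul_cancel₀ _ (ne_of_gt hτ₀)]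
    ring
  have hw'nn : ∀ i ∈ I, 0 ≤ w' i := by
    intro i hi
    simp only [hw']
    rcases le_or_gt (τ i) 0 with h | h
    · nlinarith [hwpos i hi, hεpos]
    · have hiP : i ∈ P := Finset.mem_filter.mpr ⟨hi, h⟩
      have hmle := hmin i hiP
      rw [le_div_iff₀ h] at hmle
      linarith
  set J := I.erase i₀ with hJ
  have hJcard : J.card = d := by
    rw [hJ, Finset.card_erase_of_mem hi₀I, hIcard']
    omega
  have hJsum : ∀ F : Fin M → ℝ,
      ∑ k ∈ J, w' k * F k = ∑ k ∈ I, w k * F k - ε * ∑ k ∈ I, τ k * F k := by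
    intro F
    rw [hJ, Finset.sum_erase _ (by rw [hw'i₀, zero_mul])]
    rw [Finset.mul_sum, ← Finset.sum_sub_distrib]
    exact Finset.sum_congr rfl fun k _ => by simp only [hw']; ring
  have hJF : ∀ j : Fin (Fdim N), ∑ k ∈ J, w' k * Fmap (Φ k) j = 0 := by
    intro j
    rw [hJsum (fun k => Fmap (Φ k) j), hFsum j, hτF j]
    ring
  have hJz : ∑ k ∈ J, w' k * Φ k z ^ 2 = A := by
    rw [hJsum (fun k => Φ k z ^ 2), hdiag z, hτz]
    ring
  have htightJ := tight_of_F hN Φ J w' hJF z rfl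
  apply h2
  refine ⟨J, hJcard, fun k => Real.sqrt (w' k), fun i _ => Real.sqrt_nonneg _, A, hApos,
    fun x => ?_⟩
  have hterm : ∀ k ∈ J, dot x ((fun k => Real.sqrt (w' k)) k • Φ k) ^ 2
      = w' k * dot x (Φ k) ^ 2 := by
    intro k hk
    rw [dot_smul_right, mul_pow, Real.sq_sqrt (hw'nn k (Finset.mem_of_mem_erase hk))]
  rw [Finset.sum_congr rfl hterm, htightJ x, hJz]



end ScalableFrames
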